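/- Let φ(e^{iθ}) = Σ_{n=-n₀}^{n₀} a_n e^{inθ} with a_{-n} = conj(a_n), and suppose the Laurent polynomial K(z) = Σ_{n=-n₀}^{n₀} a_n z^{n+n₀} has no roots on the unit circle, with exactly n₀ roots (counted with multiplicity) inside the open unit disk. Then φ admits a factorization φ = g₁·g₂ where g₁(χ) = c·∏_j (1 - conj(α_j)·χ)^{s_j}, g₂(χ) = ∏_j (1 - α_j·conj(χ))^{s_j}, the α_j being the roots of K of modulus < 1 with multiplicities s_j, with g₁ and 1/g₁ in H^∞(𝕋), conj(g₂) and 1/conj(g₂) in H^∞(𝕋), and c a nonzero constant. -/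

import Mathlib

open Complex Finset Polynomial

private lemma wh_reverse_pow (f : ℂ[X]) (n : ℕ) : (f ^ n).reverse = f.reverse ^ n := by
  induction n with
  | zero => simp [Polynomial.reverse]
  | succ n ih => rw [pow_succ, Polynomial.reverse_mul_of_domain, ih, pow_succ]

private lemma wh_reverse_linear (c : ℂ) : (X - C c).reverse = 1 - C c * X := by
  have h1 : (X - C c).natDegree = 1 := by
    simpa using Polynomial.natDegree_X_sub_C c
  unfold Polynomial.reverse
  rw [h1]
  ext m
  rcases m with _ | _ | m <;>
    simp [Polynomial.coeff_reflect, Polynomial.revAt, Function.Embedding.coeFn_mk,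
      Polynomial.coeff_sub]

private lemma wh_linear_factor (c : ℂ) (hc : c ≠ 0) :
    (1 : ℂ[X]) - C c * X = C (-c) * (X - C c⁻¹) := by
  have : (-c) * c⁻¹ = -1 := by field_simp
  rw [mul_sub, ← Polynomial.C_mul, this]
  simp only [map_neg, map_one]
  ring

private lemma wh_dvd_reverse (p : ℂ[X]) (α : ℂ) (n : ℕ) (hα : α ≠ 0)
    (h : (X - C α) ^ n ∣ p) :
    (X - C ((starRingEnd ℂ) α)⁻¹) ^ n ∣ (p.map (starRingEnd ℂ)).reverse := by
  obtain ⟨q, hq⟩ := h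
  have hmap : p.map (starRingEnd ℂ) = (X - C ((starRingEnd ℂ) α)) ^ n * q.map (starRingEnd ℂ) := by
    rw [hq]; simp [Polynomial.map_pow]
  rw [hmap, Polynomial.reverse_mul_of_domain, wh_reverse_pow, wh_reverse_linear,
    wh_linear_factor _ (by simpa using hα), mul_pow]
  exact Dvd.dvd.mul_right (Dvd.dvd.mul_left dvd_rfl _) _

/-- Wiener–Hopf factorization of a Hermitian banded symbol: if
`K(z) = Σ a_n z^{n+n₀}` has no unit-modulus roots and exactly `n₀` roots inside the unit
disk, then `φ = g₁·g₂` with `g₁(χ) = c∏(1-conj(α_j)χ)^{s_j}`, `g₂(χ) = ∏(1-α_j conj χ)^{s_j}`,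
both `g₁, 1/g₁` and `conj g₂, 1/conj g₂` lying in `H^∞(𝕋)` (here: the analytic factors are
nonvanishing on the closed unit disk). -/
theorem banded_symbol_factorization
    (n₀ : ℕ) (hn₀ : 1 ≤ n₀) (a : ℤ → ℂ)
    (hsupp : ∀ n : ℤ, (n₀ : ℤ) < |n| → a n = 0)
    (hherm : ∀ n : ℤ, a (-n) = (starRingEnd ℂ) (a n))
    (htop : a (n₀ : ℤ) ≠ 0)
    (K : Polynomial ℂ)
    (hK : K = ∑ j ∈ Finset.range (2 * n₀ + 1), Polynomial.C (a ((j : ℤ) - (n₀ : ℤ))) * X ^ j)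
    (hNoUnitRoots : ∀ z : ℂ, K.IsRoot z → ‖z‖ ≠ 1)
    (hInside : Multiset.card (K.roots.filter (fun z => ‖z‖ < 1)) = n₀) :
    ∃ (σ : ℕ) (αs : Fin σ → ℂ) (s : Fin σ → ℕ) (c : ℂ),
      c ≠ 0 ∧
      Function.Injective αs ∧
      (∀ j, ‖αs j‖ < 1) ∧
      (∀ j, K.roots.count (αs j) = s j) ∧
      (∑ j, s j) = n₀ ∧
      -- `g₁` and `1/g₁` in `H^∞`: the analytic factor is zero-free on the closed disk
      (∀ z : ℂ, ‖z‖ ≤ 1 →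
        c * ∏ j, (1 - (starRingEnd ℂ) (αs j) * z) ^ (s j) ≠ 0) ∧
      -- `conj g₂` and `1/conj g₂` in `H^∞`: likewise zero-free on the closed disk
      (∀ z : ℂ, ‖z‖ ≤ 1 →
        (∏ j, (1 - αs j * z) ^ (s j)) ≠ 0) ∧
      -- the factorization `φ = g₁ · g₂` on the circle
      (∀ θ : ℝ,
        (∑ n ∈ Finset.Icc (-(n₀ : ℤ)) (n₀ : ℤ), a n * Complex.exp ((n : ℂ) * θ * Complex.I)) =
          (c * ∏ j, (1 - (starRingEnd ℂ) (αs j) * Complex.exp (θ * Complex.I)) ^ (s j)) *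
          (∏ j, (1 - αs j * Complex.exp (-(θ * Complex.I))) ^ (s j))) := by
  classical
  -- coefficients of K
  have hcoeff : ∀ m : ℕ,
      K.coeff m = if m ∈ Finset.range (2 * n₀ + 1) then a ((m : ℤ) - (n₀ : ℤ)) else 0 := by
    intro m
    rw [hK, Polynomial.finset_sum_coeff]
    simp only [Polynomial.coeff_C_mul, Polynomial.coeff_X_pow, mul_ite, mul_one, mul_zero]
    rw [Finset.sum_ite_eq (Finset.range (2 * n₀ + 1)) m (fun j => a ((j : ℤ) - (n₀ : ℤ)))]
  have htopc : K.coeff (2 * n₀) = a (n₀ : ℤ) := by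
    rw [hcoeff]
    have h2 : ((2 * n₀ : ℕ) : ℤ) - (n₀ : ℤ) = (n₀ : ℤ) := by push_cast; ring
    rw [if_pos (by simp only [Finset.mem_range]; omega), h2]
  have hKne : K ≠ 0 := by
    intro h
    rw [h] at htopc
    exact htop (by simpa using htopc.symm)
  have hdeg : K.natDegree = 2 * n₀ := by
    apply le_antisymm
    · rw [Polynomial.natDegree_le_iff_coeff_eq_zero]
      intro m hm
      rw [hcoeff, if_neg (by simp only [Finset.mem_range]; omega)]
    · exact Polynomial.le_natDegree_of_ne_zero (htopc ▸ htop)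
  have hlead : K.leadingCoeff = a (n₀ : ℤ) := by
    rw [Polynomial.leadingCoeff, hdeg, htopc]
  -- 0 is not a root
  have hzero : ¬ K.IsRoot 0 := by
    intro h
    have h0 : K.coeff 0 = 0 := by
      rwa [Polynomial.coeff_zero_eq_eval_zero]
    rw [hcoeff, if_pos (by simp)] at h0
    have : a (-(n₀ : ℤ)) = 0 := by simpa using h0
    rw [hherm] at this
    exact htop (by simpa using this)
  have hrootne : ∀ β ∈ K.roots, β ≠ 0 := by
    intro β hβ h0
    exact hzero (h0 ▸ Polynomial.isRoot_of_mem_roots hβ)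
  have hrootnabs : ∀ β ∈ K.roots, ‖β‖ ≠ 1 := fun β hβ =>
    hNoUnitRoots β (Polynomial.isRoot_of_mem_roots hβ)
  -- the hermitian symmetry of K
  have hsym : K = (K.map (starRingEnd ℂ)).reverse := by
    have hdm : (K.map (starRingEnd ℂ)).natDegree = 2 * n₀ := by
      rw [Polynomial.natDegree_map, hdeg]
    ext m
    rw [Polynomial.coeff_reverse, hdm, Polynomial.coeff_map]
    by_cases hm : m ≤ 2 * n₀
    · rw [Polynomial.revAt_le hm, hcoeff, hcoeff,
        if_pos (by simp only [Finset.mem_range]; omega), if_pos (by simp only [Finset.mem_range]; omega)]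
      have hc : ((2 * n₀ - m : ℕ) : ℤ) - (n₀ : ℤ) = -(((m : ℤ) - (n₀ : ℤ))) := by
        push_cast [Nat.cast_sub hm]; ring
      rw [hc, hherm, Complex.conj_conj]
    · rw [Polynomial.revAt_eq_self_of_lt (by omega), hcoeff,
        if_neg (by simp only [Finset.mem_range]; omega)]
      simp
  -- multiplicity symmetry
  have hmult : ∀ β : ℂ, β ≠ 0 →
      K.roots.count β ≤ K.roots.count ((starRingEnd ℂ) β)⁻¹ := by
    intro β hβ
    rw [Polynomial.count_roots, Polynomial.count_roots]
    rw [Polynomial.le_rootMultiplicity_iff hKne]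
    nth_rewrite 2 [hsym]
    exact wh_dvd_reverse K β _ hβ (Polynomial.pow_rootMultiplicity_dvd K β)
  have hmult' : ∀ β : ℂ, K.roots.count β = K.roots.count ((starRingEnd ℂ) β)⁻¹ := by
    intro β
    by_cases hβ : β = 0
    · rw [hβ]; simp
    · refine le_antisymm (hmult β hβ) ?_
      have hβ' : ((starRingEnd ℂ) β)⁻¹ ≠ 0 := by
        simp [hβ]
      have := hmult _ hβ'
      rwa [map_inv₀, Complex.conj_conj, inv_inv] at this
  -- the inside and outside root multisets
  set f : ℂ → ℂ := fun z => ((starRingEnd ℂ) z)⁻¹ with hf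
  have hf_invol : Function.Involutive f := by
    intro z; simp [hf, map_inv₀]
  have hf_inj : Function.Injective f := hf_invol.injective
  set M : Multiset ℂ := K.roots.filter (fun z => ‖z‖ < 1) with hM
  have hmultf : ∀ β : ℂ, Multiset.count β K.roots = Multiset.count (f β) K.roots := hmult'
  have habsf : ∀ β : ℂ, β ≠ 0 → ‖f β‖ = ‖β‖⁻¹ := by
    intro β hβ; simp [hf, map_inv₀]
  have hN : K.roots.filter (fun z => ¬ ‖z‖ < 1) = M.map f := by
    ext β
    have hcnt : Multiset.count β (M.map f) = Multiset.count (f β) M := by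
      nth_rewrite 1 [← hf_invol β]
      rw [Multiset.count_map_eq_count' f M hf_inj]
    rw [hcnt, Multiset.count_filter, hM, Multiset.count_filter]
    by_cases hroot : Multiset.count β K.roots = 0
    · have hroot' : Multiset.count (f β) K.roots = 0 := (hmultf β) ▸ hroot
      simp [hroot, hroot']
    · have hβmem : β ∈ K.roots := Multiset.count_pos.mp (Nat.pos_of_ne_zero hroot)
      have hβ0 : β ≠ 0 := hrootne β hβmem
      have hβ1 : ‖β‖ ≠ 1 := hrootnabs β hβmem
      rw [← hmultf β, habsf β hβ0]
      have habspos : 0 < ‖β‖ := norm_pos_iff.mpr hβ0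
      rcases lt_or_gt_of_ne hβ1 with h | h
      · rw [if_neg (not_not.mpr h), if_neg (by rw [not_lt]; exact (one_le_inv₀ habspos).mpr h.le)]
      · rw [if_pos (not_lt.mpr h.le), if_pos ((inv_lt_one₀ habspos).mpr h)]
  have hsplit : K.roots = M + M.map f := by
    rw [← hN, hM, Multiset.filter_add_not]
  have hMcard : Multiset.card M = n₀ := hInside
  -- enumeration of distinct inside roots
  set σ := M.toFinset.card with hσ
  set e := M.toFinset.equivFin with he
  set αs : Fin σ → ℂ := fun j => ((e.symm j : {x // x ∈ M.toFinset}) : ℂ) with hαs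
  set s : Fin σ → ℕ := fun j => M.count (αs j) with hs
  have hmemM : ∀ j, αs j ∈ M := fun j => Multiset.mem_toFinset.mp (e.symm j).2
  have hmemR : ∀ j, αs j ∈ K.roots := fun j => Multiset.mem_of_mem_filter (hmemM j)
  have habs : ∀ j, ‖αs j‖ < 1 := fun j => (Multiset.mem_filter.mp (hmemM j)).2
  have hne0 : ∀ j, αs j ≠ 0 := fun j => hrootne _ (hmemR j)
  have hainj : Function.Injective αs := by
    intro i j hij
    exact e.symm.injective (Subtype.ext hij)
  have hcount : ∀ j, K.roots.count (αs j) = s j := by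
    intro j
    show K.roots.count (αs j) = M.count (αs j)
    rw [hM, Multiset.count_filter, if_pos (habs j)]
  -- generic product formula over the inside roots
  have gprod : ∀ g : ℂ → ℂ, (M.map g).prod = ∏ j, g (αs j) ^ s j := by
    intro g
    rw [Finset.prod_multiset_map_count, ← Finset.prod_coe_sort M.toFinset
      (fun x => g x ^ M.count x),
      ← Equiv.prod_comp e.symm (fun x : {x // x ∈ M.toFinset} => g (x : ℂ) ^ M.count (x : ℂ))]
  have hsum : (∑ j, s j) = n₀ := by
    have h1 : (∑ j, s j) = ∑ x ∈ M.toFinset, M.count x := by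
      rw [← Finset.sum_coe_sort M.toFinset (fun x => M.count x),
        ← Equiv.sum_comp e.symm (fun x : {x // x ∈ M.toFinset} => M.count (x : ℂ))]
    rw [h1, Multiset.toFinset_sum_count_eq, hMcard]
  set c : ℂ := a (n₀ : ℤ) * ∏ j, (-((starRingEnd ℂ) (αs j))⁻¹) ^ s j with hc
  have hcne : c ≠ 0 := mul_ne_zero htop (Finset.prod_ne_zero_iff.mpr fun j _ =>
    pow_ne_zero _ (neg_ne_zero.mpr (inv_ne_zero (by simpa using hne0 j))))
  -- nonvanishing of the linear factors on the closed disk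
  have hfac1 : ∀ (β z : ℂ), ‖β‖ < 1 → ‖z‖ ≤ 1 → (1 : ℂ) - β * z ≠ 0 := by
    intro β z hβ hz h
    have h1 : β * z = 1 := by linear_combination -h
    have h2 : ‖β * z‖ < 1 := by
      rw [norm_mul]
      calc ‖β‖ * ‖z‖ ≤ ‖β‖ * 1 :=
            mul_le_mul_of_nonneg_left hz (norm_nonneg _)
        _ < 1 := by simpa using hβ
    rw [h1] at h2; simp at h2
  -- the polynomial factorization of K
  have hfactor : K = C (a (n₀ : ℤ)) * (K.roots.map fun r => X - C r).prod := by
    nth_rewrite 1 [Polynomial.Splits.eq_prod_roots (IsAlgClosed.splits K)]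
    rw [hlead]
  refine ⟨σ, αs, s, c, hcne, hainj, habs, hcount, hsum, ?_, ?_, ?_⟩
  · intro z hz
    exact mul_ne_zero hcne (Finset.prod_ne_zero_iff.mpr fun j _ => pow_ne_zero _
      (hfac1 _ z (by simpa using habs j) hz))
  · intro z hz
    exact Finset.prod_ne_zero_iff.mpr fun j _ => pow_ne_zero _ (hfac1 _ z (habs j) hz)
  · intro θ
    set w : ℂ := Complex.exp ((θ : ℂ) * I) with hw
    have hwne : w ≠ 0 := Complex.exp_ne_zero _
    have hexp : ∀ n : ℤ, Complex.exp ((n : ℂ) * (θ : ℂ) * I) = w ^ n := by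
      intro n; rw [mul_assoc, hw]; exact Complex.exp_int_mul _ n
    have hexpneg : Complex.exp (-((θ : ℂ) * I)) = w⁻¹ := by rw [Complex.exp_neg]
    -- evaluating K at w via its coefficients
    have hevalsum : K.eval w = ∑ j ∈ Finset.range (2 * n₀ + 1), a ((j : ℤ) - (n₀ : ℤ)) * w ^ j := by
      rw [hK]; simp [Polynomial.eval_finset_sum]
    have hreindex : K.eval w =
        w ^ n₀ * ∑ n ∈ Finset.Icc (-(n₀ : ℤ)) (n₀ : ℤ), a n * w ^ n := by
      rw [hevalsum, Finset.mul_sum]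
      refine Finset.sum_bij' (fun (j : ℕ) _ => (j : ℤ) - (n₀ : ℤ))
        (fun (n : ℤ) _ => (n + (n₀ : ℤ)).toNat) ?_ ?_ ?_ ?_ ?_
      · intro j hj
        simp only [Finset.mem_range] at hj
        simp only [Finset.mem_Icc]
        omega
      · intro n hn
        simp only [Finset.mem_Icc] at hn
        simp only [Finset.mem_range]
        omega
      · intro j hj; simp only [Finset.mem_range] at hj; beta_reduce; omega
      · intro n hn; simp only [Finset.mem_Icc] at hn; beta_reduce; omega
      · intro j hj
        simp only [Finset.mem_range] at hj
        show a ((j : ℤ) - (n₀ : ℤ)) * w ^ j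
            = w ^ n₀ * (a ((j : ℤ) - (n₀ : ℤ)) * w ^ ((j : ℤ) - (n₀ : ℤ)))
        rw [← mul_assoc, mul_comm (w ^ n₀) (a ((j : ℤ) - (n₀ : ℤ))), mul_assoc]
        congr 1
        rw [← zpow_natCast w n₀, ← zpow_add₀ hwne, ← zpow_natCast w j]
        congr 1
        omega
    -- evaluating K at w via its roots
    have hevalprod : K.eval w =
        a (n₀ : ℤ) * ((∏ j, (w - f (αs j)) ^ s j) * ∏ j, (w - αs j) ^ s j) := by
      conv_lhs => rw [hfactor]
      rw [Polynomial.eval_mul, Polynomial.eval_C, Polynomial.eval_multiset_prod,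
        Multiset.map_map, hsplit, Multiset.map_add, Multiset.prod_add, Multiset.map_map]
      have e1 : ((Polynomial.eval w) ∘ fun r => X - C r) = fun r : ℂ => w - r := by
        funext r; simp
      have e2 : ((fun r : ℂ => w - r) ∘ f) = fun r : ℂ => w - f r := by
        funext r; simp
      rw [e1, e2, gprod (fun r : ℂ => w - r), gprod (fun r : ℂ => w - f r)]
      ring
    -- identifying the two factors
    have hg1 : (c * ∏ j, (1 - (starRingEnd ℂ) (αs j) * w) ^ s j)
        = a (n₀ : ℤ) * ∏ j, (w - f (αs j)) ^ s j := by
      rw [hc, mul_assoc, ← Finset.prod_mul_distrib]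
      congr 1
      refine Finset.prod_congr rfl fun j _ => ?_
      rw [← mul_pow]
      congr 1
      have hconj : (starRingEnd ℂ) (αs j) ≠ 0 := by simpa using hne0 j
      rw [hf]
      field_simp
      ring
    have hg2 : w ^ n₀ * ∏ j, (1 - αs j * w⁻¹) ^ s j = ∏ j, (w - αs j) ^ s j := by
      rw [← hsum, ← Finset.prod_pow_eq_pow_sum, ← Finset.prod_mul_distrib]
      refine Finset.prod_congr rfl fun j _ => ?_
      rw [← mul_pow]
      congr 1
      field_simp
    -- conclusion
    simp only [hexp, hexpneg]
    apply mul_left_cancel₀ (pow_ne_zero n₀ hwne)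
    rw [← hreindex]
    calc K.eval w
        = (c * ∏ j, (1 - (starRingEnd ℂ) (αs j) * w) ^ s j) *
            (w ^ n₀ * ∏ j, (1 - αs j * w⁻¹) ^ s j) := by
          rw [hg1, hg2, hevalprod]; ring
      _ = w ^ n₀ * ((c * ∏ j, (1 - (starRingEnd ℂ) (αs j) * w) ^ s j) *
            ∏ j, (1 - αs j * w⁻¹) ^ s j) := by ring
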